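/- There exist a probability space Λ (namely the interval [−1/2, 1/2] with Lebesgue measure) and, for each unit vector ψ ∈ ℂ² and λ ∈ Λ, a sign s(ψ, λ, n̂) ∈ {+1, −1} defined for each unit vector n̂ ∈ ℝ³, such that for every ψ and every n̂: ∫_{−1/2}^{1/2} s(ψ, λ, n̂) dλ = ⟨ψ| (n̂ · σ⃗) |ψ⟩. -/

import Mathlib

open Matrix MeasureTheory

noncomputable def sigmaX : Matrix (Fin 2) (Fin 2) ℂ := !![0, 1; 1, 0]
noncomputable def sigmaY : Matrix (Fin 2) (Fin 2) ℂ := !![0, -Complex.I; Complex.I, 0]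
noncomputable def sigmaZ : Matrix (Fin 2) (Fin 2) ℂ := !![1, 0; 0, -1]

/-- `n̂ · σ⃗` for a vector `n̂ ∈ ℝ³`. -/
noncomputable def nDotSigma (n : Fin 3 → ℝ) : Matrix (Fin 2) (Fin 2) ℂ :=
  (n 0 : ℂ) • sigmaX + (n 1 : ℂ) • sigmaY + (n 2 : ℂ) • sigmaZ

/-- The quantum expectation is the explicit real number below. -/
lemma bell_expectation_eq (ψ : Fin 2 → ℂ) (n : Fin 3 → ℝ) :
    star ψ ⬝ᵥ (nDotSigma n *ᵥ ψ) =
      ((n 2)*((ψ 0).re^2+(ψ 0).im^2-(ψ 1).re^2-(ψ 1).im^2)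
        + 2*(n 0)*((ψ 0).re*(ψ 1).re+(ψ 0).im*(ψ 1).im)
        + 2*(n 1)*((ψ 0).re*(ψ 1).im-(ψ 0).im*(ψ 1).re) : ℝ) := by
  simp only [nDotSigma, sigmaX, sigmaY, sigmaZ, dotProduct, mulVec, Fin.sum_univ_two,
    Matrix.add_apply, Matrix.smul_apply, Matrix.cons_val', Matrix.cons_val_zero,
    Matrix.cons_val_one, Matrix.head_cons, Matrix.empty_val', Matrix.cons_val_fin_one,
    Matrix.head_fin_const, Pi.star_apply, smul_eq_mul]
  apply Complex.ext <;>
  simp [Complex.add_re, Complex.add_im, Complex.mul_re, Complex.mul_im, Complex.conj_re,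
    Complex.conj_im, ← Complex.ofReal_pow] <;> ring

/-- Integral of a step sign function over `[-1/2, 1/2]`. -/
lemma bell_sign_integral (t : ℝ) (h1 : -(1:ℝ)/2 ≤ t) (h2 : t ≤ 1/2) :
    ∫ lam in Set.Icc (-(1:ℝ)/2) (1/2), (if t ≤ lam then (1:ℝ) else -1) = -2*t := by
  have hfun : ∀ lam : ℝ, (if t ≤ lam then (1:ℝ) else -1)
      = Set.indicator (Set.Ici t) (fun _ => (2:ℝ)) lam - 1 := by
    intro lam
    by_cases h : t ≤ lam <;> simp [Set.indicator, h] <;> norm_num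
  simp_rw [hfun]
  rw [integral_sub]
  · rw [setIntegral_indicator measurableSet_Ici]
    have hset : Set.Icc (-(1:ℝ)/2) (1/2) ∩ Set.Ici t = Set.Icc t (1/2) := by
      ext x
      simp only [Set.mem_inter_iff, Set.mem_Icc, Set.mem_Ici]
      constructor
      · rintro ⟨⟨_, hb⟩, hc⟩; exact ⟨hc, hb⟩
      · rintro ⟨hc, hb⟩; exact ⟨⟨le_trans h1 hc, hb⟩, hc⟩
    rw [hset]
    simp only [setIntegral_const, smul_eq_mul, measureReal_def, Real.volume_Icc]
    rw [ENNReal.toReal_ofReal (by linarith), ENNReal.toReal_ofReal (by linarith)]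
    ring
  · exact ((integrableOn_const (by simp [Real.volume_Icc])).indicator measurableSet_Ici)
  · exact integrableOn_const (by simp [Real.volume_Icc])

/-- The core of Bell's qubit hidden-variable model: with `Λ = [−1/2, 1/2]` under
Lebesgue measure, there are signs `s(ψ, λ, n̂) ∈ {+1, −1}` whose average over `λ`
reproduces the quantum expectation `⟨ψ|(n̂·σ⃗)|ψ⟩` for every unit `ψ ∈ ℂ²` and every
unit `n̂ ∈ ℝ³`. -/
theorem bell_sign_model :
    ∃ s : (Fin 2 → ℂ) → ℝ → (Fin 3 → ℝ) → ℝ,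
      ∀ (ψ : Fin 2 → ℂ), star ψ ⬝ᵥ ψ = 1 →
      ∀ (n : Fin 3 → ℝ), (n 0) ^ 2 + (n 1) ^ 2 + (n 2) ^ 2 = 1 →
        (∀ lam : ℝ, s ψ lam n = 1 ∨ s ψ lam n = -1) ∧
        ((∫ lam in Set.Icc (-(1 : ℝ)/2) (1/2), s ψ lam n : ℝ) : ℂ)
          = star ψ ⬝ᵥ (nDotSigma n *ᵥ ψ) := by
  refine ⟨fun ψ lam n =>
    if -((n 2)*((ψ 0).re^2+(ψ 0).im^2-(ψ 1).re^2-(ψ 1).im^2)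
        + 2*(n 0)*((ψ 0).re*(ψ 1).re+(ψ 0).im*(ψ 1).im)
        + 2*(n 1)*((ψ 0).re*(ψ 1).im-(ψ 0).im*(ψ 1).re))/2 ≤ lam then 1 else -1,
    fun ψ hψ n hn => ⟨fun lam => by dsimp only; split <;> simp, ?_⟩⟩
  set a1 := (ψ 0).re with ha1
  set a2 := (ψ 0).im with ha2
  set b1 := (ψ 1).re with hb1
  set b2 := (ψ 1).im with hb2
  set e : ℝ := (n 2)*(a1^2+a2^2-b1^2-b2^2) + 2*(n 0)*(a1*b1+a2*b2) + 2*(n 1)*(a1*b2-a2*b1)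
    with he
  -- normalization in real coordinates
  have hψ2 : a1^2 + a2^2 + b1^2 + b2^2 = 1 := by
    have := congrArg Complex.re hψ
    simp only [dotProduct, Fin.sum_univ_two, Pi.star_apply, RCLike.star_def, Complex.add_re,
      Complex.mul_re, Complex.conj_re, Complex.conj_im, Complex.one_re] at this
    nlinarith [this]
  -- the "Bloch vector" is a unit vector
  have hv : (2*(a1*b1+a2*b2))^2 + (2*(a1*b2-a2*b1))^2 + (a1^2+a2^2-b1^2-b2^2)^2 = 1 := by
    have : (2*(a1*b1+a2*b2))^2 + (2*(a1*b2-a2*b1))^2 + (a1^2+a2^2-b1^2-b2^2)^2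
        = (a1^2 + a2^2 + b1^2 + b2^2)^2 := by ring
    rw [this, hψ2]; norm_num
  have he_le : e ≤ 1 := by
    nlinarith [sq_nonneg (n 0 - 2*(a1*b1+a2*b2)), sq_nonneg (n 1 - 2*(a1*b2-a2*b1)),
      sq_nonneg (n 2 - (a1^2+a2^2-b1^2-b2^2))]
  have he_ge : -1 ≤ e := by
    nlinarith [sq_nonneg (n 0 + 2*(a1*b1+a2*b2)), sq_nonneg (n 1 + 2*(a1*b2-a2*b1)),
      sq_nonneg (n 2 + (a1^2+a2^2-b1^2-b2^2))]
  have hint : (∫ lam in Set.Icc (-(1:ℝ)/2) (1/2), (if -e/2 ≤ lam then (1:ℝ) else -1)) = e := by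
    rw [bell_sign_integral (-e/2) (by linarith) (by linarith)]
    ring
  have hE := bell_expectation_eq ψ n
  rw [← ha1, ← ha2, ← hb1, ← hb2, ← he] at hE
  rw [hE]
  exact congrArg Complex.ofReal hint
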